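/- Every n-player cake-cutting instance in class X(k) admits a contiguous allocation whose egalitarian welfare is at least 1/k. -/

import Mathlib

open MeasureTheory Set

/-- An `n`-player cake-cutting instance: continuous nonnegative density functions
on `[0,1]`, each of total integral `1`. -/
structure CakeInstance (n : ℕ) where
  d : Fin n → ℝ → ℝ
  cont : ∀ i, ContinuousOn (d i) (Set.Icc 0 1)
  nonneg : ∀ i, ∀ x ∈ Set.Icc (0:ℝ) 1, 0 ≤ d i x
  total : ∀ i, ∫ x in (0:ℝ)..1, d i x = 1

namespace CakeInstance

/-- Value of player `i` for the interval `[a,b]`. -/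
noncomputable def ival {n : ℕ} (C : CakeInstance n) (i : Fin n) (a b : ℝ) : ℝ :=
  ∫ x in a..b, C.d i x

/-- Value of player `i` for a set `S`. -/
noncomputable def sval {n : ℕ} (C : CakeInstance n) (i : Fin n) (S : Set ℝ) : ℝ :=
  ∫ x in S, C.d i x

end CakeInstance

/-- A contiguous allocation: weakly increasing cut points `x 0 = 0 ≤ … ≤ x n = 1`
together with a permutation `σ` assigning the `j`-th interval `[x j, x (j+1)]`
to player `σ j`. -/
structure ContigAlloc (n : ℕ) where
  x : Fin (n+1) → ℝ
  mono : Monotone x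
  first : x 0 = 0
  last : x (Fin.last n) = 1
  σ : Equiv.Perm (Fin n)

/-- The (closed) interval received by player `i` in a contiguous allocation. -/
def cpiece {n : ℕ} (A : ContigAlloc n) (i : Fin n) : Set ℝ :=
  Set.Icc (A.x (A.σ.symm i).castSucc) (A.x (A.σ.symm i).succ)

/-- Value of player `i` for the interval received by player `j`. -/
noncomputable def cval {n : ℕ} (C : CakeInstance n) (A : ContigAlloc n) (i j : Fin n) : ℝ :=
  C.ival i (A.x (A.σ.symm j).castSucc) (A.x (A.σ.symm j).succ)

/-- Utilitarian welfare of a contiguous allocation. -/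
noncomputable def cWelfare {n : ℕ} (C : CakeInstance n) (A : ContigAlloc n) : ℝ :=
  ∑ i, cval C A i i

/-- Egalitarian welfare of a contiguous allocation. -/
noncomputable def cEgal {n : ℕ} (C : CakeInstance n) (A : ContigAlloc n) : ℝ :=
  ⨅ i, cval C A i i

/-- A contiguous allocation is envy-free if nobody prefers another player's interval. -/
def cEnvyFree {n : ℕ} (C : CakeInstance n) (A : ContigAlloc n) : Prop :=
  ∀ i j, cval C A i j ≤ cval C A i i

/-- A `k`-piece allocation: each player `i` receives the union of (at most) `k`
closed intervals `[lo i m, hi i m] ⊆ [0,1]` (possibly degenerate); all these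
intervals are pairwise non-overlapping and together they cover `[0,1]`. -/
structure KPieceAlloc (n k : ℕ) where
  lo : Fin n → Fin k → ℝ
  hi : Fin n → Fin k → ℝ
  le : ∀ i m, lo i m ≤ hi i m
  sub : ∀ i m, Set.Icc (lo i m) (hi i m) ⊆ Set.Icc (0:ℝ) 1
  nonoverlap : ∀ i m i' m', (i, m) ≠ (i', m') →
      Set.Ioo (lo i m) (hi i m) ∩ Set.Ioo (lo i' m') (hi i' m') = ∅
  cover : (⋃ i, ⋃ m, Set.Icc (lo i m) (hi i m)) = Set.Icc (0:ℝ) 1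

/-- Value of player `i` for the portion received by player `j` in a `k`-piece allocation. -/
noncomputable def kval {n k : ℕ} (C : CakeInstance n) (A : KPieceAlloc n k) (i j : Fin n) : ℝ :=
  ∑ m, C.ival i (A.lo j m) (A.hi j m)

/-- Utilitarian welfare of a `k`-piece allocation. -/
noncomputable def kWelfare {n k : ℕ} (C : CakeInstance n) (A : KPieceAlloc n k) : ℝ :=
  ∑ i, kval C A i i

/-- Egalitarian welfare of a `k`-piece allocation. -/
noncomputable def kEgal {n k : ℕ} (C : CakeInstance n) (A : KPieceAlloc n k) : ℝ :=
  ⨅ i, kval C A i i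

/-- A `k`-piece allocation is envy-free if nobody prefers another player's portion. -/
def kEnvyFree {n k : ℕ} (C : CakeInstance n) (A : KPieceAlloc n k) : Prop :=
  ∀ i j, kval C A i j ≤ kval C A i i

/-- A witness that an `n`-player cake-cutting instance lies in the class `X(k)`:
cut points `0 = c 0 < c 1 < … < c (n*k) = 1` and an ownership map under which each
player owns exactly `k` of the pieces `[c j, c (j+1)]` and values the unowned pieces `0`. -/
structure XkWitness {n : ℕ} (C : CakeInstance n) (k : ℕ) where
  c : Fin (n*k+1) → ℝ
  mono : StrictMono c
  first : c 0 = 0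
  last : c (Fin.last (n*k)) = 1
  owner : Fin (n*k) → Fin n
  ownCount : ∀ i : Fin n, (Finset.univ.filter fun j => owner j = i).card = k
  zeroVal : ∀ (i : Fin n) (j : Fin (n*k)), owner j ≠ i →
      C.ival i (c j.castSucc) (c j.succ) = 0

/-- The `j`-th owned piece, as a set. -/
def XkWitness.pieceSet {n k : ℕ} {C : CakeInstance n} (W : XkWitness C k)
    (j : Fin (n*k)) : Set ℝ :=
  Set.Icc (W.c j.castSucc) (W.c j.succ)

/-- Value of player `i` for the `j`-th owned piece. -/
noncomputable def XkWitness.pieceVal {n k : ℕ} {C : CakeInstance n} (W : XkWitness C k)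
    (i : Fin n) (j : Fin (n*k)) : ℝ :=
  C.ival i (W.c j.castSucc) (W.c j.succ)

/-- A `k`-piece allocation gives each player exactly the pieces he owns:
every owned piece occurs among its owner's allocated intervals. -/
def XkWitness.givesOwnedPieces {n k : ℕ} {C : CakeInstance n} (W : XkWitness C k)
    (A : KPieceAlloc n k) : Prop :=
  ∀ j : Fin (n*k), ∃ m : Fin k,
    A.lo (W.owner j) m = W.c j.castSucc ∧ A.hi (W.owner j) m = W.c j.succ


section AuxEgal

open intervalIntegral

variable {n k : ℕ} {C : CakeInstance n}

lemma CakeInstance.ii (C : CakeInstance n) (i : Fin n) {a b : ℝ}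
    (ha : a ∈ Set.Icc (0:ℝ) 1) (hb : b ∈ Set.Icc (0:ℝ) 1) :
    IntervalIntegrable (C.d i) MeasureTheory.volume a b :=
  ((C.cont i).mono (Set.uIcc_subset_Icc ha hb)).intervalIntegrable

lemma XkWitness.c_mem (W : XkWitness C k) (j : Fin (n*k+1)) :
    W.c j ∈ Set.Icc (0:ℝ) 1 := by
  constructor
  · rw [← W.first]; exact W.mono.monotone (Fin.zero_le j)
  · rw [← W.last]; exact W.mono.monotone (Fin.le_last j)

lemma XkWitness.sum_pieceVal (W : XkWitness C k) (i : Fin n) :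
    ∑ j : Fin (n*k), W.pieceVal i j = 1 := by
  set N := n*k with hN
  set a : ℕ → ℝ := fun t => W.c ⟨min t N, by omega⟩ with ha
  have hint : ∀ t, t < N → IntervalIntegrable (C.d i) MeasureTheory.volume (a t) (a (t+1)) :=
    fun t ht => C.ii i (W.c_mem _) (W.c_mem _)
  have key := intervalIntegral.sum_integral_adjacent_intervals (f := C.d i)
    (μ := MeasureTheory.volume) (a := a) (n := N) hint
  have ha0 : a 0 = 0 := by
    have : (⟨min 0 N, by omega⟩ : Fin (N+1)) = 0 := by ext; simp
    rw [ha]; simp only; rw [this, W.first]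
  have haN : a N = 1 := by
    have : (⟨min N N, by omega⟩ : Fin (N+1)) = Fin.last N := by ext; simp
    rw [ha]; simp only; rw [this, W.last]
  rw [ha0, haN] at key
  have htot := C.total i
  have hsum : ∑ j : Fin N, W.pieceVal i j
      = ∑ t ∈ Finset.range N, ∫ x in a t..a (t+1), C.d i x := by
    rw [← Fin.sum_univ_eq_sum_range (fun t => ∫ x in a t..a (t+1), C.d i x) N]
    apply Finset.sum_congr rfl
    intro j _
    have hj : (j:ℕ) < N := j.isLt
    unfold XkWitness.pieceVal CakeInstance.ival
    have h1 : a (j:ℕ) = W.c j.castSucc := by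
      simp only [ha]
      congr 1
      ext
      simp [min_eq_left hj.le]
    have h2 : a ((j:ℕ)+1) = W.c j.succ := by
      simp only [ha]
      congr 1
      ext
      simp [min_eq_left (show (j:ℕ)+1 ≤ N from hj)]
    rw [h1, h2]
  rw [hsum, key, htot]

lemma XkWitness.exists_good (W : XkWitness C k) (hk : k ≠ 0) (i : Fin n) :
    ∃ j, W.owner j = i ∧ (1:ℝ)/k ≤ W.pieceVal i j := by
  by_contra hcon
  push_neg at hcon
  have hsplit : ∑ j ∈ Finset.univ.filter (fun j => W.owner j = i), W.pieceVal i j = 1 := by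
    rw [← W.sum_pieceVal i]
    apply Finset.sum_subset (Finset.filter_subset _ _)
    intro j _ hj
    simp only [Finset.mem_filter, Finset.mem_univ, true_and] at hj
    exact W.zeroVal i j hj
  have hcard := W.ownCount i
  have hne : (Finset.univ.filter (fun j => W.owner j = i)).Nonempty := by
    rw [← Finset.card_pos, hcard]; omega
  have hlt : ∑ j ∈ Finset.univ.filter (fun j => W.owner j = i), W.pieceVal i j
      < ∑ _j ∈ Finset.univ.filter (fun j => W.owner j = i), (1:ℝ)/k := by
    apply Finset.sum_lt_sum_of_nonempty hne
    intro j hj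
    simp only [Finset.mem_filter, Finset.mem_univ, true_and] at hj
    exact hcon j hj
  rw [hsplit, Finset.sum_const, hcard, nsmul_eq_mul, mul_one_div,
    div_self (Nat.cast_ne_zero.mpr hk)] at hlt
  exact lt_irrefl _ hlt

end AuxEgal

/-- Every `n`-player instance in `X(k)` admits a contiguous allocation
with egalitarian welfare at least `1/k`. -/
theorem egalitarian_lower_bound_Xk (n k : ℕ) (hn : 1 ≤ n) (C : CakeInstance n)
    (W : XkWitness C k) :
    ∃ A : ContigAlloc n, (∀ i, (1:ℝ)/k ≤ cval C A i i) ∧ (1:ℝ)/k ≤ cEgal C A := by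
  classical
  rcases Nat.eq_zero_or_pos k with hk0 | hkpos
  · exfalso
    subst hk0
    have h0 := W.first
    have h1 := W.last
    have hlast0 : Fin.last (n*0) = (0 : Fin (n*0+1)) := by
      ext; simp
    rw [hlast0, h0] at h1
    norm_num at h1
  have hkne : k ≠ 0 := hkpos.ne'
  have hch : ∀ i, ∃ j, W.owner j = i ∧ (1:ℝ)/k ≤ W.pieceVal i j := W.exists_good hkne
  choose f hf1 hf2 using hch
  have hfinj : Function.Injective f := fun i i' h => by rw [← hf1 i, ← hf1 i', h]
  set σ := Tuple.sort f with hσ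
  set p : Fin n → Fin (n*k) := f ∘ σ with hp
  have hpm : StrictMono p :=
    (Tuple.monotone_sort f).strictMono_of_injective (hfinj.comp σ.injective)
  have hcmono : Monotone W.c := W.mono.monotone
  set x : Fin (n+1) → ℝ := fun t =>
    if ht : (t:ℕ) < n then (if (t:ℕ) = 0 then 0 else W.c (p ⟨t, ht⟩).castSucc) else 1 with hx
  have hxmem : ∀ t, x t ∈ Set.Icc (0:ℝ) 1 := by
    intro t
    simp only [hx]
    split_ifs with h1 h2
    · exact ⟨le_refl 0, zero_le_one⟩
    · exact W.c_mem _
    · exact ⟨zero_le_one, le_refl 1⟩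
  have hx0 : x 0 = 0 := by
    simp only [hx]
    rw [dif_pos (by simp; omega), if_pos (by simp)]
  have hxlast : x (Fin.last n) = 1 := by
    simp only [hx]
    rw [dif_neg (by simp)]
  have hxmono : Monotone x := by
    intro t t' htt
    by_cases h2 : (t':ℕ) < n
    · have h1 : (t:ℕ) < n := lt_of_le_of_lt htt h2
      simp only [hx]
      rw [dif_pos h1, dif_pos h2]
      by_cases h3 : (t:ℕ) = 0
      · rw [if_pos h3]
        split_ifs with h4
        · exact le_refl 0
        · exact (W.c_mem _).1
      · have h4 : (t':ℕ) ≠ 0 := by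
          have : (t:ℕ) ≤ (t':ℕ) := htt
          omega
        rw [if_neg h3, if_neg h4]
        exact hcmono (Fin.castSucc_le_castSucc_iff.mpr (hpm.monotone (by exact htt)))
    · calc x t ≤ 1 := (hxmem t).2
        _ = x t' := by simp only [hx]; rw [dif_neg h2]
  have hmain : ∀ i, (1:ℝ)/k ≤ cval C ⟨x, hxmono, hx0, hxlast, σ⟩ i i := by
    intro i
    set m : Fin n := σ.symm i with hm
    have hpmeq : p m = f i := by
      simp only [hp, hm, Function.comp_apply, Equiv.apply_symm_apply]
    have hL : x m.castSucc ≤ W.c (p m).castSucc := by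
      have hlt : (m.castSucc : ℕ) < n := m.isLt
      simp only [hx]
      rw [dif_pos hlt]
      by_cases h3 : ((m.castSucc : Fin (n+1)) : ℕ) = 0
      · rw [if_pos h3]; exact (W.c_mem _).1
      · rw [if_neg h3]
        have : (⟨(m.castSucc : ℕ), hlt⟩ : Fin n) = m := by ext; simp
        rw [this]
    have hR : W.c (p m).succ ≤ x m.succ := by
      by_cases h1 : ((m.succ : Fin (n+1)) : ℕ) < n
      · simp only [hx]
        rw [dif_pos h1, if_neg (by simp)]
        have hmlt : m < (⟨(m.succ : ℕ), h1⟩ : Fin n) := by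
          simp [Fin.lt_def]
        exact hcmono (Fin.succ_le_castSucc_iff.mpr (hpm hmlt))
      · calc W.c (p m).succ ≤ 1 := (W.c_mem _).2
          _ = x m.succ := by simp only [hx]; rw [dif_neg h1]
    have hcc : W.c (p m).castSucc ≤ W.c (p m).succ := hcmono (Fin.castSucc_le_succ _)
    have hbig : C.ival i (W.c (p m).castSucc) (W.c (p m).succ)
        ≤ C.ival i (x m.castSucc) (x m.succ) := by
      unfold CakeInstance.ival
      apply intervalIntegral.integral_mono_interval hL hcc hR
      · filter_upwards [MeasureTheory.ae_restrict_mem measurableSet_Ioc] with y hy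
        exact C.nonneg i y ⟨le_trans (hxmem _).1 hy.1.le, le_trans hy.2 (hxmem _).2⟩
      · exact C.ii i (hxmem _) (hxmem _)
    have hval : (1:ℝ)/k ≤ C.ival i (W.c (p m).castSucc) (W.c (p m).succ) := by
      rw [hpmeq]; exact hf2 i
    calc (1:ℝ)/k ≤ C.ival i (W.c (p m).castSucc) (W.c (p m).succ) := hval
      _ ≤ C.ival i (x m.castSucc) (x m.succ) := hbig
      _ = cval C ⟨x, hxmono, hx0, hxlast, σ⟩ i i := rfl
  haveI : Nonempty (Fin n) := ⟨⟨0, hn⟩⟩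
  exact ⟨⟨x, hxmono, hx0, hxlast, σ⟩, hmain, le_ciInf hmain⟩
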